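/- arXiv:2304.07118 — 3 statements merged into one kernel-verified Lean document; each statement's English description precedes it below -/
import Mathlib

section
/- Under the su(N) generator hypotheses, for all i, j, k, l ∈ Fin N: Σ_{a : Fin (N^2 − 1)} (T a) i j · (T a) k l = (1/2) · δ_{i l} · δ_{j k} − (1/(2·N)) · δ_{i j} · δ_{k l}, where δ is the Kronecker delta. -/
open Matrix

/-- **Completeness relation for su(N) generators.**
For orthonormalized traceless Hermitian generators `T a` of su(N),
`∑ a, (T a) i j * (T a) k l = (1/2) δ_{il} δ_{jk} − (1/(2N)) δ_{ij} δ_{kl}`. -/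
theorem suN_completeness (N : ℕ) (hN : 2 ≤ N)
    (T : Fin (N ^ 2 - 1) → Matrix (Fin N) (Fin N) ℂ)
    (htr : ∀ a, (T a).trace = 0)
    (hherm : ∀ a, (T a)ᴴ = T a)
    (horth : ∀ a b, (T a * T b).trace = if a = b then (1 / 2 : ℂ) else 0)
    (i j k l : Fin N) :
    ∑ a, T a i j * T a k l =
      (1 / 2 : ℂ) * (if i = l then 1 else 0) * (if j = k then 1 else 0)
        - (1 / (2 * (N : ℂ))) * (if i = j then 1 else 0) * (if k = l then 1 else 0) := by
  classical
  have hNne : N ≠ 0 := by omega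
  have hN0 : (N : ℂ) ≠ 0 := Nat.cast_ne_zero.mpr hNne
  set F : Option (Fin (N ^ 2 - 1)) → Matrix (Fin N) (Fin N) ℂ :=
    fun v => v.elim 1 T with hF
  -- coefficients are determined by traces
  have coeff : ∀ (g : Option (Fin (N ^ 2 - 1)) → ℂ) (M : Matrix (Fin N) (Fin N) ℂ),
      ∑ v, g v • F v = M →
      g none * N = M.trace ∧ ∀ b, g (some b) = 2 * (M * T b).trace := by
    intro g M h
    constructor
    · have h1 := congrArg Matrix.trace h
      rw [Matrix.trace_sum] at h1
      simp only [Matrix.trace_smul, smul_eq_mul] at h1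
      rw [Fintype.sum_option] at h1
      simp only [hF, Option.elim, Matrix.trace_one, htr, mul_zero, Finset.sum_const_zero,
        add_zero, Fintype.card_fin] at h1
      exact h1
    · intro b
      have h2 := congrArg (fun X => (X * T b).trace) h
      simp only [Finset.sum_mul, smul_mul_assoc, Matrix.trace_sum, Matrix.trace_smul,
        smul_eq_mul] at h2
      rw [Fintype.sum_option] at h2
      simp only [hF, Option.elim, one_mul, htr, mul_zero, horth] at h2
      simp only [mul_ite, mul_zero] at h2
      rw [Finset.sum_ite_eq' Finset.univ b (fun x => g (some x) * (1 / 2))] at h2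
      simp only [Finset.mem_univ, if_true, zero_add] at h2
      linear_combination 2 * h2
  -- linear independence
  have li : LinearIndependent ℂ F := by
    rw [Fintype.linearIndependent_iff]
    intro g h v
    obtain ⟨h0, hs⟩ := coeff g 0 h
    cases v with
    | none =>
      simp only [Matrix.trace_zero] at h0
      exact (mul_eq_zero.mp h0).resolve_right hN0
    | some b => simpa using hs b
  have hcard : Fintype.card (Option (Fin (N ^ 2 - 1))) = Module.finrank ℂ (Matrix (Fin N) (Fin N) ℂ) := by
    rw [Module.finrank_matrix]
    simp only [Fintype.card_option, Fintype.card_fin, Module.finrank_self, mul_one]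
    have h1 : 1 ≤ N ^ 2 := Nat.one_le_pow _ _ (by omega)
    have h2 : N ^ 2 = N * N := by ring
    rw [← h2]
    omega
  obtain ⟨b, hb⟩ : ∃ b : Module.Basis (Option (Fin (N ^ 2 - 1))) ℂ (Matrix (Fin N) (Fin N) ℂ), ⇑b = F :=
    ⟨basisOfLinearIndependentOfCardEqFinrank li hcard,
      coe_basisOfLinearIndependentOfCardEqFinrank li hcard⟩
  have hrepr : ∑ v, b.repr (Matrix.single j i 1) v • F v = Matrix.single j i 1 := by
    rw [← hb]; exact b.sum_repr _
  obtain ⟨h0, hs⟩ := coeff (b.repr (Matrix.single j i 1)) _ hrepr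
  -- trace computations
  have trM : (Matrix.single j i (1 : ℂ)).trace = if i = j then 1 else 0 := by
    by_cases h : i = j
    · subst h
      rw [Matrix.trace_single_eq_same, if_pos rfl]
    · rw [Matrix.trace_single_eq_of_ne (h := Ne.symm h), if_neg h]
  have trMT : ∀ a, (Matrix.single j i (1 : ℂ) * T a).trace = T a i j := by
    intro a
    rw [Matrix.trace]
    rw [Finset.sum_eq_single j]
    · simp
    · intro x _ hx
      simp [Matrix.diag_apply, Matrix.single_mul_apply_of_ne (h := hx)]
    · simp
  -- evaluate the expansion at entry (k, l)
  have hentry := congrFun (congrFun hrepr k) l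
  rw [Matrix.sum_apply] at hentry
  simp only [Matrix.smul_apply, smul_eq_mul] at hentry
  rw [Fintype.sum_option] at hentry
  simp only [hF, Option.elim] at hentry
  simp only [hs, trMT] at hentry
  have hMkl : Matrix.single j i (1 : ℂ) k l
      = (if i = l then 1 else 0) * (if j = k then 1 else 0) := by
    by_cases h1 : i = l <;> by_cases h2 : j = k <;>
      simp [Matrix.single, Matrix.of_apply, h1, h2]
  have hone : (1 : Matrix (Fin N) (Fin N) ℂ) k l = if k = l then 1 else 0 := Matrix.one_apply
  rw [hMkl, hone] at hentry
  have h0' : b.repr (Matrix.single j i 1) none = (if i = j then (1:ℂ) else 0) / N := by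
    rw [eq_div_iff hN0, h0, trM]
  rw [h0'] at hentry
  have hsum : ∑ a, 2 * (T a).trace • T a k l = 0 := by
    simp [htr]
  have hentry2 : (if i = j then (1:ℂ) else 0) / N * (if k = l then 1 else 0)
      + 2 * ∑ a, T a i j * T a k l
      = (if i = l then 1 else 0) * (if j = k then 1 else 0) := by
    rw [← hentry, Finset.mul_sum]
    congr 1
    apply Finset.sum_congr rfl
    intro a _; ring
  have h2S : 2 * ∑ a, T a i j * T a k l
      = (if i = l then (1:ℂ) else 0) * (if j = k then 1 else 0)
        - (if i = j then (1:ℂ) else 0) / N * (if k = l then 1 else 0) := by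
    linear_combination hentry2
  linear_combination h2S / 2
end

section
/- Under the su(N) generator hypotheses, define the symmetric constants d a b c := 2·trace ((T a * T b + T b * T a) * T c). Then for all i₁, i₂, i₃, j₁, j₂, j₃ ∈ Fin N: Σ_{a,b,c : Fin (N^2 − 1)} d a b c · (T a) i₁ j₁ · (T b) i₂ j₂ · (T c) i₃ j₃ = (1/4)·(δ_{i₁ j₂}·δ_{i₂ j₃}·δ_{i₃ j₁} + δ_{i₁ j₃}·δ_{i₂ j₁}·δ_{i₃ j₂}) − (1/(2·N))·(δ_{i₁ j₁}·δ_{i₂ j₃}·δ_{i₃ j₂} + δ_{i₂ j₂}·δ_{i₁ j₃}·δ_{i₃ j₁} + δ_{i₃ j₃}·δ_{i₁ j₂}·δ_{i₂ j₁}) + (1/N^2)·δ_{i₁ j₁}·δ_{i₂ j₂}·δ_{i₃ j₃}, where δ is the Kronecker delta. -/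
open Matrix Module

/-- The symmetric constants `d a b c = 2·Tr({T a, T b}·T c)`. -/
noncomputable def dConst {N : ℕ} (T : Fin (N ^ 2 - 1) → Matrix (Fin N) (Fin N) ℂ)
    (a b c : Fin (N ^ 2 - 1)) : ℂ :=
  2 * ((T a * T b + T b * T a) * T c).trace

variable {N : ℕ}

/-- The auxiliary real-spanning family. -/
noncomputable def Sfam (T : Fin (N ^ 2 - 1) → Matrix (Fin N) (Fin N) ℂ) :
    (Fin (N ^ 2 - 1) ⊕ Fin (N ^ 2 - 1) ⊕ Fin 2) → Matrix (Fin N) (Fin N) ℂ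
  | .inl a => T a
  | .inr (.inl a) => Complex.I • T a
  | .inr (.inr 0) => 1
  | .inr (.inr 1) => Complex.I • (1 : Matrix (Fin N) (Fin N) ℂ)

theorem Sfam_span (hN : 2 ≤ N) (T : Fin (N ^ 2 - 1) → Matrix (Fin N) (Fin N) ℂ)
    (htr : ∀ a, (T a).trace = 0)
    (horth : ∀ a b, (T a * T b).trace = if a = b then (1 / 2 : ℂ) else 0) :
    Submodule.span ℝ (Set.range (Sfam T)) = ⊤ := by
  have hNC : (N : ℂ) ≠ 0 := Nat.cast_ne_zero.2 (by omega)
  have hli : LinearIndependent ℝ (Sfam T) := by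
    rw [Fintype.linearIndependent_iff]
    intro g hg
    -- repackage as a complex linear combination
    set z : Fin (N ^ 2 - 1) → ℂ := fun a => (g (.inl a) : ℂ) + g (.inr (.inl a)) * Complex.I
    set w : ℂ := (g (.inr (.inr 0)) : ℂ) + g (.inr (.inr 1)) * Complex.I
    have hz : ∑ a, z a • T a + w • (1 : Matrix (Fin N) (Fin N) ℂ) = 0 := by
      rw [← hg]
      rw [Fintype.sum_sum_type, Fintype.sum_sum_type]
      have h2 : ∑ x : Fin 2, g (.inr (.inr x)) • Sfam T (.inr (.inr x))
          = g (.inr (.inr 0)) • (1 : Matrix (Fin N) (Fin N) ℂ)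
            + g (.inr (.inr 1)) • (Complex.I • (1 : Matrix (Fin N) (Fin N) ℂ)) := by
        simp [Fin.sum_univ_two, Sfam]
      rw [h2]
      have hr : ∀ (r : ℝ) (M : Matrix (Fin N) (Fin N) ℂ), (r : ℂ) • M = r • M := fun r M => by simp
      simp only [Sfam, z, w, add_smul, Finset.sum_add_distrib, hr, ← smul_assoc,
        Complex.real_smul]
      abel
    have hw : w = 0 := by
      have := congrArg Matrix.trace hz
      simp only [trace_add, trace_sum, trace_smul, htr, smul_zero, Finset.sum_const_zero,
        trace_zero, trace_one, zero_add, smul_eq_mul] at this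
      simpa [Finset.card_univ, hNC] using this
    have hzz : ∀ b, z b = 0 := by
      intro b
      have := congrArg (fun M => (M * T b).trace) hz
      simp only [add_mul, Matrix.sum_mul, smul_mul_assoc, trace_add, trace_sum, trace_smul,
        horth, one_mul, Matrix.zero_mul, trace_zero, smul_eq_mul, htr, hw, zero_smul,
        zero_mul, add_zero, zero_add] at this
      rw [Finset.sum_eq_single b] at this
      · simpa using this
      · intro c _ hc; simp [hc]
      · simp
    intro i
    rcases i with a | a | x
    · have := hzz a; simp [z, Complex.ext_iff] at this; exact this.1
    · have := hzz a; simp [z, Complex.ext_iff] at this; exact this.2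
    · fin_cases x
      · simp only [w, Complex.ext_iff] at hw; simp at hw; exact hw.1
      · simp only [w, Complex.ext_iff] at hw; simp at hw; exact hw.2
  have hcard : Fintype.card (Fin (N ^ 2 - 1) ⊕ Fin (N ^ 2 - 1) ⊕ Fin 2)
      = finrank ℝ (Matrix (Fin N) (Fin N) ℂ) := by
    rw [Module.finrank_matrix, Complex.finrank_real_complex]
    simp only [Fintype.card_sum, Fintype.card_fin]
    have h1 : 1 ≤ N ^ 2 := Nat.one_le_pow _ _ (by omega)
    have h2 : N ^ 2 = N * N := by ring
    omega
  exact hli.span_eq_top_of_card_eq_finrank hcard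

theorem key0 (hN : 2 ≤ N) (T : Fin (N ^ 2 - 1) → Matrix (Fin N) (Fin N) ℂ)
    (htr : ∀ a, (T a).trace = 0)
    (horth : ∀ a b, (T a * T b).trace = if a = b then (1 / 2 : ℂ) else 0)
    (X : Matrix (Fin N) (Fin N) ℂ) :
    ∑ a, (T a * X).trace • T a
      = (2 : ℂ)⁻¹ • X - (X.trace / (2 * N)) • (1 : Matrix (Fin N) (Fin N) ℂ) := by
  have hNC : (N : ℂ) ≠ 0 := Nat.cast_ne_zero.2 (by omega)
  set Dc : Matrix (Fin N) (Fin N) ℂ →ₗ[ℂ] Matrix (Fin N) (Fin N) ℂ :=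
    (∑ a, ((Matrix.traceLinearMap (Fin N) ℂ ℂ).comp (LinearMap.mulLeft ℂ (T a))).smulRight (T a))
      - (2 : ℂ)⁻¹ • LinearMap.id
      + (2 * (N : ℂ))⁻¹ • ((Matrix.traceLinearMap (Fin N) ℂ ℂ).smulRight 1) with hDc
  have hDapp : ∀ Y, Dc Y = ∑ a, (T a * Y).trace • T a - (2 : ℂ)⁻¹ • Y
      + (Y.trace * (2 * (N : ℂ))⁻¹) • 1 := by
    intro Y
    simp [hDc, LinearMap.sum_apply, LinearMap.smulRight_apply, LinearMap.mulLeft_apply,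
      smul_smul, mul_comm]
  have hDT : ∀ b, Dc (T b) = 0 := by
    intro b
    rw [hDapp]
    have : ∑ a, (T a * T b).trace • T a = (2 : ℂ)⁻¹ • T b := by
      have h1 : ∀ x, ((if x = b then (1 / 2 : ℂ) else 0) • T x)
          = if x = b then (2 : ℂ)⁻¹ • T x else 0 := by
        intro x; split <;> norm_num
      simp only [horth, h1, Finset.sum_ite_eq' Finset.univ b, Finset.mem_univ, if_true]
    rw [this, htr]
    simp
  have hD1 : Dc (1 : Matrix (Fin N) (Fin N) ℂ) = 0 := by
    rw [hDapp]
    simp only [mul_one, htr, zero_smul, Finset.sum_const_zero, trace_one]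
    rw [zero_sub]
    simp only [Finset.card_univ, Fintype.card_fin, nsmul_eq_mul, mul_one]
    rw [mul_inv, ← mul_assoc, mul_comm ((N : ℂ)) _, mul_assoc, mul_inv_cancel₀ hNC]
    module
  have hzero : ∀ i, (Dc.restrictScalars ℝ) (Sfam T i) = (0 : _ →ₗ[ℝ] _) (Sfam T i) := by
    intro i
    rcases i with a | a | x
    · simpa [Sfam] using hDT a
    · simp only [Sfam, LinearMap.coe_restrictScalars, LinearMap.map_smul, hDT a, smul_zero,
        LinearMap.zero_apply]
    · fin_cases x
      · simpa [Sfam] using hD1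
      · simp only [Sfam, LinearMap.coe_restrictScalars, LinearMap.map_smul, hD1, smul_zero,
          LinearMap.zero_apply]
  have hsp := Sfam_span hN T htr horth
  have hall : ∀ Y, Dc Y = 0 := by
    intro Y
    have hY : Y ∈ Submodule.span ℝ (Set.range (Sfam T)) := by rw [hsp]; trivial
    have h := LinearMap.eqOn_span (f := Dc.restrictScalars ℝ) (g := 0)
      (fun y hy => by obtain ⟨i, rfl⟩ := hy; exact hzero i) hY
    simpa using h
  have := hall X
  rw [hDapp] at this
  have h2 : ∑ a, (T a * X).trace • T a
      = (2 : ℂ)⁻¹ • X - (X.trace * (2 * (N : ℂ))⁻¹) • 1 := by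
    linear_combination (norm := module) this
  rw [h2]
  rw [div_eq_mul_inv]

theorem key1 (hN : 2 ≤ N) (T : Fin (N ^ 2 - 1) → Matrix (Fin N) (Fin N) ℂ)
    (htr : ∀ a, (T a).trace = 0)
    (horth : ∀ a b, (T a * T b).trace = if a = b then (1 / 2 : ℂ) else 0)
    (X M : Matrix (Fin N) (Fin N) ℂ) :
    ∑ a, (T a * X).trace * (M * T a).trace
      = (M * X).trace / 2 - M.trace * X.trace / (2 * N) := by
  have h := congrArg (fun Y => (M * Y).trace) (key0 hN T htr horth X)
  simp only [Matrix.mul_sum, trace_sum, Matrix.mul_smul, trace_smul, smul_eq_mul, mul_sub,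
    Matrix.mul_one, trace_sub] at h
  calc ∑ a, (T a * X).trace * (M * T a).trace
      = ∑ a, (T a * X).trace * (M * T a).trace := rfl
    _ = _ := by linear_combination h

private lemma expand3 {ι : Type*} [Fintype ι] (g t1 t2 t3 : ι → ℂ) (f c : ℂ) :
    ∑ b, f * g b * (t1 b + t2 b - c * t3 b)
      = f * ((∑ b, g b * t1 b) + (∑ b, g b * t2 b) - c * (∑ b, g b * t3 b)) := by
  simp only [Finset.mul_sum, ← Finset.sum_sub_distrib, ← Finset.sum_add_distrib]
  exact Finset.sum_congr rfl fun b _ => by ring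

private lemma expand4 {ι : Type*} [Fintype ι] (g t1 t2 t3 t4 : ι → ℂ) (c1 c2 c3 c4 : ℂ) :
    ∑ a, g a * (c1 * t1 a + c2 * t2 a + c3 * t3 a + c4 * t4 a)
      = c1 * (∑ a, g a * t1 a) + c2 * (∑ a, g a * t2 a) + c3 * (∑ a, g a * t3 a)
        + c4 * (∑ a, g a * t4 a) := by
  simp only [Finset.mul_sum, ← Finset.sum_add_distrib]
  exact Finset.sum_congr rfl fun b _ => by ring

theorem main_aux (hN : 2 ≤ N) (T : Fin (N ^ 2 - 1) → Matrix (Fin N) (Fin N) ℂ)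
    (htr : ∀ a, (T a).trace = 0)
    (horth : ∀ a b, (T a * T b).trace = if a = b then (1 / 2 : ℂ) else 0)
    (A B C : Matrix (Fin N) (Fin N) ℂ) :
    ∑ a, ∑ b, ∑ c, dConst T a b c * (T a * A).trace * (T b * B).trace * (T c * C).trace
      = (1 / 4 : ℂ) * ((A * B * C).trace + (B * A * C).trace)
        - 1 / (2 * N) * (A.trace * (B * C).trace + B.trace * (A * C).trace
            + C.trace * (A * B).trace)
        + A.trace * B.trace * C.trace / N ^ 2 := by
  have hNC : (N : ℂ) ≠ 0 := Nat.cast_ne_zero.2 (by omega)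
  have k1 := key1 hN T htr horth
  have hc : ∀ a b, ∑ c, dConst T a b c * (T a * A).trace * (T b * B).trace * (T c * C).trace
      = (T a * A).trace * (T b * B).trace *
          ((C * T a * T b).trace + (T a * C * T b).trace
            - (2 * C.trace / N) * (T a * T b).trace) := by
    intro a b
    have e1 : ∀ c, dConst T a b c * (T a * A).trace * (T b * B).trace * (T c * C).trace
        = (2 * ((T a * A).trace * (T b * B).trace)) *
          ((T c * C).trace * ((T a * T b + T b * T a) * T c).trace) := by
      intro c; simp only [dConst]; ring
    rw [Finset.sum_congr rfl fun c _ => e1 c, ← Finset.mul_sum,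
      k1 C (T a * T b + T b * T a)]
    rw [Matrix.add_mul, trace_add, trace_add, trace_mul_comm (T b) (T a),
      trace_mul_cycle (T a) (T b) C, ← trace_mul_cycle (T a) C (T b)]
    field_simp [hNC]
    ring
  have hb : ∀ a, ∑ b, ∑ c,
        dConst T a b c * (T a * A).trace * (T b * B).trace * (T c * C).trace
      = (T a * A).trace *
          ((1 / 2 : ℂ) * ((B * C) * T a).trace + (1 / 2 : ℂ) * ((C * B) * T a).trace
            + (-(B.trace / N)) * (C * T a).trace + (-(C.trace / N)) * (B * T a).trace) := by
    intro a
    rw [Finset.sum_congr rfl fun b _ => hc a b]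
    rw [expand3 (fun b => (T b * B).trace) (fun b => (C * T a * T b).trace)
      (fun b => (T a * C * T b).trace) (fun b => (T a * T b).trace)
      ((T a * A).trace) (2 * C.trace / N)]
    rw [k1 B (C * T a), k1 B (T a * C), k1 B (T a), htr a]
    rw [trace_mul_cycle C (T a) B, ← trace_mul_cycle C B (T a),
      trace_mul_comm (T a) C, trace_mul_comm (T a) B]
    field_simp [hNC]
    ring
  rw [Finset.sum_congr rfl fun a _ => hb a]
  rw [expand4 (fun a => (T a * A).trace) (fun a => ((B * C) * T a).trace)
    (fun a => ((C * B) * T a).trace) (fun a => (C * T a).trace) (fun a => (B * T a).trace)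
    (1 / 2 : ℂ) (1 / 2 : ℂ) (-(B.trace / N)) (-(C.trace / N))]
  rw [k1 A (B * C), k1 A (C * B), k1 A C, k1 A B]
  rw [trace_mul_comm (B * C) A, trace_mul_comm (C * B) A, trace_mul_comm C A,
    trace_mul_comm B A, ← Matrix.mul_assoc, ← Matrix.mul_assoc,
    trace_mul_cycle A C B, trace_mul_comm C B]
  simp only [div_eq_mul_inv, mul_inv, inv_pow]
  ring

private lemma if_mul_if (P Q : Prop) [Decidable P] [Decidable Q] (x : ℂ) :
    (if P then (if Q then x else 0) else 0) = (if P then (1 : ℂ) else 0) * (if Q then x else 0) := by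
  split_ifs <;> simp

private lemma trE (M : Matrix (Fin N) (Fin N) ℂ) (i j : Fin N) :
    (M * Matrix.single j i 1).trace = M i j := by
  simp [Matrix.trace, Matrix.diag, Matrix.mul_apply, Matrix.single, ite_and,
    Finset.sum_ite_eq, Finset.sum_ite_eq']

set_option maxHeartbeats 1600000 in
/-- **Contraction of three su(N) generators with the symmetric constants d.** -/
theorem suN_d_contraction (N : ℕ) (hN : 2 ≤ N)
    (T : Fin (N ^ 2 - 1) → Matrix (Fin N) (Fin N) ℂ)
    (htr : ∀ a, (T a).trace = 0)
    (hherm : ∀ a, (T a)ᴴ = T a)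
    (horth : ∀ a b, (T a * T b).trace = if a = b then (1 / 2 : ℂ) else 0)
    (i₁ i₂ i₃ j₁ j₂ j₃ : Fin N) :
    ∑ a, ∑ b, ∑ c, dConst T a b c * T a i₁ j₁ * T b i₂ j₂ * T c i₃ j₃ =
      (1 / 4 : ℂ) *
          ((if i₁ = j₂ then 1 else 0) * (if i₂ = j₃ then 1 else 0) * (if i₃ = j₁ then 1 else 0)
            + (if i₁ = j₃ then 1 else 0) * (if i₂ = j₁ then 1 else 0) *
                (if i₃ = j₂ then 1 else 0))
        - (1 / (2 * (N : ℂ))) *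
            ((if i₁ = j₁ then 1 else 0) * (if i₂ = j₃ then 1 else 0) * (if i₃ = j₂ then 1 else 0)
              + (if i₂ = j₂ then 1 else 0) * (if i₁ = j₃ then 1 else 0) *
                  (if i₃ = j₁ then 1 else 0)
              + (if i₃ = j₃ then 1 else 0) * (if i₁ = j₂ then 1 else 0) *
                  (if i₂ = j₁ then 1 else 0))
        + (1 / (N : ℂ) ^ 2) *
            ((if i₁ = j₁ then 1 else 0) * (if i₂ = j₂ then 1 else 0) *
              (if i₃ = j₃ then 1 else 0)) := by
  have h := main_aux hN T htr horth (Matrix.single j₁ i₁ 1) (Matrix.single j₂ i₂ 1)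
    (Matrix.single j₃ i₃ 1)
  simp only [trE] at h
  rw [h]
  simp only [Matrix.trace, Matrix.diag, Matrix.mul_apply, Matrix.single, Matrix.of_apply,
    ite_and, mul_ite, ite_mul, one_mul, mul_one, zero_mul, mul_zero, Finset.sum_ite_eq,
    Finset.sum_ite_eq', Finset.mem_univ, if_true]
  have e1 : (j₁ = i₃) ↔ (i₃ = j₁) := eq_comm
  have e2 : (j₂ = i₃) ↔ (i₃ = j₂) := eq_comm
  have e3 : (j₁ = i₂) ↔ (i₂ = j₁) := eq_comm
  have e4 : (if i₁ = j₁ then (1 : ℂ) / (N : ℂ) ^ 2 else 0)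
      = (if i₁ = j₁ then (1 : ℂ) else 0) * (1 / (N : ℂ) ^ 2) := by split_ifs <;> simp
  simp only [e1, e2, e3, if_mul_if, e4]
  split_ifs <;> ring
end

section
/- Let δ : Fin 4 → Matrix (Fin 4) (Fin 4) ℂ be any family of 4×4 complex matrices satisfying the Clifford relations δ μ * δ ν + δ ν * δ μ = 2·(η μ ν)·1 with η = diag(1,−1,−1,−1), and set δ5 := i·δ 0 * δ 1 * δ 2 * δ 3. Then the sixteen matrices consisting of the identity 1, the four matrices δ μ (μ ∈ Fin 4), the six products δ μ * δ ν with μ < ν, the four matrices δ5 * δ μ (μ ∈ Fin 4), and δ5, form a basis of Matrix (Fin 4) (Fin 4) ℂ as a ℂ-vector space: they are linearly independent over ℂ and their span is all of Matrix (Fin 4) (Fin 4) ℂ. -/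
noncomputable section

open Complex Matrix

/-- The Minkowski metric η = diag(1, −1, −1, −1) (entries as complex numbers). -/
def ηc (μ ν : Fin 4) : ℂ :=
  if μ = ν then (if μ = 0 then 1 else -1) else 0

/-- δ⁵ = i·δ⁰δ¹δ²δ³ for a family of Clifford matrices δ. -/
def delta5 (δ : Fin 4 → Matrix (Fin 4) (Fin 4) ℂ) : Matrix (Fin 4) (Fin 4) ℂ :=
  I • (δ 0 * δ 1 * δ 2 * δ 3)

/-- The sixteen matrices 1, δ^μ, δ^μ·δ^ν (μ < ν), δ⁵·δ^μ, δ⁵ built from a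
Clifford family δ, indexed by a type of cardinality 1 + 4 + 6 + 4 + 1 = 16. -/
def cliffordBasis (δ : Fin 4 → Matrix (Fin 4) (Fin 4) ℂ) :
    Unit ⊕ Fin 4 ⊕ {p : Fin 4 × Fin 4 // p.1 < p.2} ⊕ Fin 4 ⊕ Unit →
      Matrix (Fin 4) (Fin 4) ℂ
  | Sum.inl _ => 1
  | Sum.inr (Sum.inl μ) => δ μ
  | Sum.inr (Sum.inr (Sum.inl p)) => δ p.val.1 * δ p.val.2
  | Sum.inr (Sum.inr (Sum.inr (Sum.inl μ))) => delta5 δ * δ μ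
  | Sum.inr (Sum.inr (Sum.inr (Sum.inr _))) => delta5 δ

set_option maxHeartbeats 4000000

/-- **Any family of matrices satisfying the Clifford relations generates a basis
of the 4×4 complex matrices** consisting of 1, δ^μ, δ^μδ^ν (μ<ν), δ⁵δ^μ and δ⁵. -/
theorem clifford_basis_of_matrices (δ : Fin 4 → Matrix (Fin 4) (Fin 4) ℂ)
    (hcliff : ∀ μ ν, δ μ * δ ν + δ ν * δ μ = (2 * ηc μ ν) • (1 : Matrix (Fin 4) (Fin 4) ℂ)) :
    LinearIndependent ℂ (cliffordBasis δ) ∧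
      Submodule.span ℂ (Set.range (cliffordBasis δ)) = ⊤ := by
  have hsq : ∀ μ, δ μ * δ μ = (ηc μ μ) • (1 : Matrix (Fin 4) (Fin 4) ℂ) := by
    intro μ
    have h2 : (2:ℂ) • (δ μ * δ μ) = (2:ℂ) • ((ηc μ μ) • (1 : Matrix (Fin 4) (Fin 4) ℂ)) := by
      rw [two_smul, hcliff μ μ, smul_smul]
    exact smul_right_injective _ (two_ne_zero) h2
  have hanti : ∀ μ ν, μ ≠ ν → δ μ * δ ν = -(δ ν * δ μ) := by
    intro μ ν h
    have h2 := hcliff μ ν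
    rw [show ηc μ ν = 0 by simp [ηc, h]] at h2
    simp only [mul_zero, zero_smul] at h2
    exact eq_neg_of_add_eq_zero_left h2
  have keytr : ∀ (X : Matrix (Fin 4) (Fin 4) ℂ) (ν : Fin 4),
      δ ν * X = -(X * δ ν) → X.trace = 0 := by
    intro X ν h
    have hz : ηc ν ν ≠ 0 := by by_cases h0 : ν = 0 <;> simp [ηc, h0]
    have h2 : (δ ν * X * δ ν).trace = (ηc ν ν) * X.trace := by
      rw [mul_assoc, Matrix.trace_mul_comm, mul_assoc, hsq]
      simp [Matrix.trace_smul, smul_eq_mul]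
    have h3 : (δ ν * X * δ ν).trace = -((ηc ν ν) * X.trace) := by
      rw [h]
      simp only [neg_mul, mul_assoc, hsq]
      simp [Matrix.trace_smul, smul_eq_mul]
    have h4 : (ηc ν ν) * X.trace = 0 := by
      have h5 := h2.symm.trans h3
      linear_combination h5 / 2
    rcases mul_eq_zero.mp h4 with h5 | h5
    · exact absurd h5 hz
    · exact h5

  have s00 : δ 0 * δ 0 = 1 := by rw [hsq, show ηc 0 0 = 1 from rfl, one_smul]
  have s11 : δ 1 * δ 1 = -1 := by rw [hsq, show ηc 1 1 = -1 from rfl, neg_smul, one_smul]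
  have s22 : δ 2 * δ 2 = -1 := by rw [hsq, show ηc 2 2 = -1 from rfl, neg_smul, one_smul]
  have s33 : δ 3 * δ 3 = -1 := by rw [hsq, show ηc 3 3 = -1 from rfl, neg_smul, one_smul]
  have s00' : ∀ x, δ 0 * (δ 0 * x) = x := fun x => by rw [← mul_assoc, s00, one_mul]
  have s11' : ∀ x, δ 1 * (δ 1 * x) = -x := fun x => by rw [← mul_assoc, s11, neg_one_mul]
  have s22' : ∀ x, δ 2 * (δ 2 * x) = -x := fun x => by rw [← mul_assoc, s22, neg_one_mul]
  have s33' : ∀ x, δ 3 * (δ 3 * x) = -x := fun x => by rw [← mul_assoc, s33, neg_one_mul]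
  have w10 : δ 1 * δ 0 = -(δ 0 * δ 1) := hanti 1 0 (by decide)
  have w20 : δ 2 * δ 0 = -(δ 0 * δ 2) := hanti 2 0 (by decide)
  have w21 : δ 2 * δ 1 = -(δ 1 * δ 2) := hanti 2 1 (by decide)
  have w30 : δ 3 * δ 0 = -(δ 0 * δ 3) := hanti 3 0 (by decide)
  have w31 : δ 3 * δ 1 = -(δ 1 * δ 3) := hanti 3 1 (by decide)
  have w32 : δ 3 * δ 2 = -(δ 2 * δ 3) := hanti 3 2 (by decide)
  have w10' : ∀ x, δ 1 * (δ 0 * x) = -(δ 0 * (δ 1 * x)) := fun x => by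
    rw [← mul_assoc, w10, neg_mul, mul_assoc]
  have w20' : ∀ x, δ 2 * (δ 0 * x) = -(δ 0 * (δ 2 * x)) := fun x => by
    rw [← mul_assoc, w20, neg_mul, mul_assoc]
  have w21' : ∀ x, δ 2 * (δ 1 * x) = -(δ 1 * (δ 2 * x)) := fun x => by
    rw [← mul_assoc, w21, neg_mul, mul_assoc]
  have w30' : ∀ x, δ 3 * (δ 0 * x) = -(δ 0 * (δ 3 * x)) := fun x => by
    rw [← mul_assoc, w30, neg_mul, mul_assoc]
  have w31' : ∀ x, δ 3 * (δ 1 * x) = -(δ 1 * (δ 3 * x)) := fun x => by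
    rw [← mul_assoc, w31, neg_mul, mul_assoc]
  have w32' : ∀ x, δ 3 * (δ 2 * x) = -(δ 2 * (δ 3 * x)) := fun x => by
    rw [← mul_assoc, w32, neg_mul, mul_assoc]
  have trd : ∀ μ, (δ μ).trace = 0 := by
    intro μ
    rcases eq_or_ne μ 0 with h0 | h0
    · subst h0; exact keytr _ 1 w10
    · exact keytr _ 0 (hanti 0 μ (Ne.symm h0))
  have tr01 : (δ 0 * δ 1).trace = 0 := keytr _ 0 (by simp only [mul_assoc, s00', s11', s22', s33', w10', w20', w21', w30', w31', w32', s00, s11, s22, s33, w10, w20, w21, w30, w31, w32, mul_neg, neg_mul, neg_neg, mul_one, one_mul])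
  have tr02 : (δ 0 * δ 2).trace = 0 := keytr _ 0 (by simp only [mul_assoc, s00', s11', s22', s33', w10', w20', w21', w30', w31', w32', s00, s11, s22, s33, w10, w20, w21, w30, w31, w32, mul_neg, neg_mul, neg_neg, mul_one, one_mul])
  have tr03 : (δ 0 * δ 3).trace = 0 := keytr _ 0 (by simp only [mul_assoc, s00', s11', s22', s33', w10', w20', w21', w30', w31', w32', s00, s11, s22, s33, w10, w20, w21, w30, w31, w32, mul_neg, neg_mul, neg_neg, mul_one, one_mul])
  have tr12 : (δ 1 * δ 2).trace = 0 := keytr _ 1 (by simp only [mul_assoc, s00', s11', s22', s33', w10', w20', w21', w30', w31', w32', s00, s11, s22, s33, w10, w20, w21, w30, w31, w32, mul_neg, neg_mul, neg_neg, mul_one, one_mul])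
  have tr13 : (δ 1 * δ 3).trace = 0 := keytr _ 1 (by simp only [mul_assoc, s00', s11', s22', s33', w10', w20', w21', w30', w31', w32', s00, s11, s22, s33, w10, w20, w21, w30, w31, w32, mul_neg, neg_mul, neg_neg, mul_one, one_mul])
  have tr23 : (δ 2 * δ 3).trace = 0 := keytr _ 2 (by simp only [mul_assoc, s00', s11', s22', s33', w10', w20', w21', w30', w31', w32', s00, s11, s22, s33, w10, w20, w21, w30, w31, w32, mul_neg, neg_mul, neg_neg, mul_one, one_mul])
  have tr012 : (δ 0 * (δ 1 * δ 2)).trace = 0 := keytr _ 3 (by simp only [mul_assoc, s00', s11', s22', s33', w10', w20', w21', w30', w31', w32', s00, s11, s22, s33, w10, w20, w21, w30, w31, w32, mul_neg, neg_mul, neg_neg, mul_one, one_mul])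
  have tr013 : (δ 0 * (δ 1 * δ 3)).trace = 0 := keytr _ 2 (by simp only [mul_assoc, s00', s11', s22', s33', w10', w20', w21', w30', w31', w32', s00, s11, s22, s33, w10, w20, w21, w30, w31, w32, mul_neg, neg_mul, neg_neg, mul_one, one_mul])
  have tr023 : (δ 0 * (δ 2 * δ 3)).trace = 0 := keytr _ 1 (by simp only [mul_assoc, s00', s11', s22', s33', w10', w20', w21', w30', w31', w32', s00, s11, s22, s33, w10, w20, w21, w30, w31, w32, mul_neg, neg_mul, neg_neg, mul_one, one_mul])
  have tr123 : (δ 1 * (δ 2 * δ 3)).trace = 0 := keytr _ 0 (by simp only [mul_assoc, s00', s11', s22', s33', w10', w20', w21', w30', w31', w32', s00, s11, s22, s33, w10, w20, w21, w30, w31, w32, mul_neg, neg_mul, neg_neg, mul_one, one_mul])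
  have tr0123 : (δ 0 * (δ 1 * (δ 2 * δ 3))).trace = 0 := keytr _ 0 (by simp only [mul_assoc, s00', s11', s22', s33', w10', w20', w21', w30', w31', w32', s00, s11, s22, s33, w10, w20, w21, w30, w31, w32, mul_neg, neg_mul, neg_neg, mul_one, one_mul])

  have hli : LinearIndependent ℂ (cliffordBasis δ) := by
    rw [Fintype.linearIndependent_iff]
    intro g hg
    simp only [Fintype.sum_sum_type, Fintype.sum_unique, Fin.sum_univ_four] at hg
    rw [show (Finset.univ : Finset {p : Fin 4 × Fin 4 // p.1 < p.2}) =
        {⟨(0,1), by decide⟩, ⟨(0,2), by decide⟩, ⟨(0,3), by decide⟩,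
         ⟨(1,2), by decide⟩, ⟨(1,3), by decide⟩, ⟨(2,3), by decide⟩} from by decide,
      Finset.sum_insert (by decide), Finset.sum_insert (by decide), Finset.sum_insert (by decide),
      Finset.sum_insert (by decide), Finset.sum_insert (by decide), Finset.sum_singleton] at hg
    have e1 : g (Sum.inl ()) = 0 := by
      have h := congrArg Matrix.trace hg
      simp only [cliffordBasis, delta5, mul_add, mul_zero, Matrix.trace_add, Matrix.trace_smul, Matrix.trace_neg, Matrix.trace_zero, Matrix.trace_one, smul_eq_mul, Complex.I_mul_I, mul_assoc, s00', s11', s22', s33', w10', w20', w21', w30', w31', w32', s00, s11, s22, s33, w10, w20, w21, w30, w31, w32, mul_neg, neg_mul, neg_neg, mul_one, one_mul, smul_mul_assoc, mul_smul_comm, smul_smul, smul_neg, neg_smul, one_smul, trd, tr01, tr02, tr03, tr12, tr13, tr23, tr012, tr013, tr023, tr123, tr0123, Fintype.card_fin, Nat.cast_ofNat, add_zero, zero_add, neg_zero, zero_mul, neg_eq_zero, mul_eq_zero, or_false, false_or, OfNat.ofNat_ne_zero] at h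
      exact h
    have ed0 : g (Sum.inr (Sum.inl 0)) = 0 := by
      have h := congrArg (fun X => ((δ 0) * X).trace) hg
      simp only [cliffordBasis, delta5, mul_add, mul_zero, Matrix.trace_add, Matrix.trace_smul, Matrix.trace_neg, Matrix.trace_zero, Matrix.trace_one, smul_eq_mul, Complex.I_mul_I, mul_assoc, s00', s11', s22', s33', w10', w20', w21', w30', w31', w32', s00, s11, s22, s33, w10, w20, w21, w30, w31, w32, mul_neg, neg_mul, neg_neg, mul_one, one_mul, smul_mul_assoc, mul_smul_comm, smul_smul, smul_neg, neg_smul, one_smul, trd, tr01, tr02, tr03, tr12, tr13, tr23, tr012, tr013, tr023, tr123, tr0123, Fintype.card_fin, Nat.cast_ofNat, add_zero, zero_add, neg_zero, zero_mul, neg_eq_zero, mul_eq_zero, or_false, false_or, OfNat.ofNat_ne_zero] at h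
      exact h
    have ed1 : g (Sum.inr (Sum.inl 1)) = 0 := by
      have h := congrArg (fun X => ((δ 1) * X).trace) hg
      simp only [cliffordBasis, delta5, mul_add, mul_zero, Matrix.trace_add, Matrix.trace_smul, Matrix.trace_neg, Matrix.trace_zero, Matrix.trace_one, smul_eq_mul, Complex.I_mul_I, mul_assoc, s00', s11', s22', s33', w10', w20', w21', w30', w31', w32', s00, s11, s22, s33, w10, w20, w21, w30, w31, w32, mul_neg, neg_mul, neg_neg, mul_one, one_mul, smul_mul_assoc, mul_smul_comm, smul_smul, smul_neg, neg_smul, one_smul, trd, tr01, tr02, tr03, tr12, tr13, tr23, tr012, tr013, tr023, tr123, tr0123, Fintype.card_fin, Nat.cast_ofNat, add_zero, zero_add, neg_zero, zero_mul, neg_eq_zero, mul_eq_zero, or_false, false_or, OfNat.ofNat_ne_zero] at h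
      exact h
    have ed2 : g (Sum.inr (Sum.inl 2)) = 0 := by
      have h := congrArg (fun X => ((δ 2) * X).trace) hg
      simp only [cliffordBasis, delta5, mul_add, mul_zero, Matrix.trace_add, Matrix.trace_smul, Matrix.trace_neg, Matrix.trace_zero, Matrix.trace_one, smul_eq_mul, Complex.I_mul_I, mul_assoc, s00', s11', s22', s33', w10', w20', w21', w30', w31', w32', s00, s11, s22, s33, w10, w20, w21, w30, w31, w32, mul_neg, neg_mul, neg_neg, mul_one, one_mul, smul_mul_assoc, mul_smul_comm, smul_smul, smul_neg, neg_smul, one_smul, trd, tr01, tr02, tr03, tr12, tr13, tr23, tr012, tr013, tr023, tr123, tr0123, Fintype.card_fin, Nat.cast_ofNat, add_zero, zero_add, neg_zero, zero_mul, neg_eq_zero, mul_eq_zero, or_false, false_or, OfNat.ofNat_ne_zero] at h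
      exact h
    have ed3 : g (Sum.inr (Sum.inl 3)) = 0 := by
      have h := congrArg (fun X => ((δ 3) * X).trace) hg
      simp only [cliffordBasis, delta5, mul_add, mul_zero, Matrix.trace_add, Matrix.trace_smul, Matrix.trace_neg, Matrix.trace_zero, Matrix.trace_one, smul_eq_mul, Complex.I_mul_I, mul_assoc, s00', s11', s22', s33', w10', w20', w21', w30', w31', w32', s00, s11, s22, s33, w10, w20, w21, w30, w31, w32, mul_neg, neg_mul, neg_neg, mul_one, one_mul, smul_mul_assoc, mul_smul_comm, smul_smul, smul_neg, neg_smul, one_smul, trd, tr01, tr02, tr03, tr12, tr13, tr23, tr012, tr013, tr023, tr123, tr0123, Fintype.card_fin, Nat.cast_ofNat, add_zero, zero_add, neg_zero, zero_mul, neg_eq_zero, mul_eq_zero, or_false, false_or, OfNat.ofNat_ne_zero] at h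
      exact h
    have e01 : g (Sum.inr (Sum.inr (Sum.inl ⟨(0,1), by decide⟩))) = 0 := by
      have h := congrArg (fun X => ((δ 0 * δ 1) * X).trace) hg
      simp only [cliffordBasis, delta5, mul_add, mul_zero, Matrix.trace_add, Matrix.trace_smul, Matrix.trace_neg, Matrix.trace_zero, Matrix.trace_one, smul_eq_mul, Complex.I_mul_I, mul_assoc, s00', s11', s22', s33', w10', w20', w21', w30', w31', w32', s00, s11, s22, s33, w10, w20, w21, w30, w31, w32, mul_neg, neg_mul, neg_neg, mul_one, one_mul, smul_mul_assoc, mul_smul_comm, smul_smul, smul_neg, neg_smul, one_smul, trd, tr01, tr02, tr03, tr12, tr13, tr23, tr012, tr013, tr023, tr123, tr0123, Fintype.card_fin, Nat.cast_ofNat, add_zero, zero_add, neg_zero, zero_mul, neg_eq_zero, mul_eq_zero, or_false, false_or, OfNat.ofNat_ne_zero] at h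
      exact h
    have e02 : g (Sum.inr (Sum.inr (Sum.inl ⟨(0,2), by decide⟩))) = 0 := by
      have h := congrArg (fun X => ((δ 0 * δ 2) * X).trace) hg
      simp only [cliffordBasis, delta5, mul_add, mul_zero, Matrix.trace_add, Matrix.trace_smul, Matrix.trace_neg, Matrix.trace_zero, Matrix.trace_one, smul_eq_mul, Complex.I_mul_I, mul_assoc, s00', s11', s22', s33', w10', w20', w21', w30', w31', w32', s00, s11, s22, s33, w10, w20, w21, w30, w31, w32, mul_neg, neg_mul, neg_neg, mul_one, one_mul, smul_mul_assoc, mul_smul_comm, smul_smul, smul_neg, neg_smul, one_smul, trd, tr01, tr02, tr03, tr12, tr13, tr23, tr012, tr013, tr023, tr123, tr0123, Fintype.card_fin, Nat.cast_ofNat, add_zero, zero_add, neg_zero, zero_mul, neg_eq_zero, mul_eq_zero, or_false, false_or, OfNat.ofNat_ne_zero] at h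
      exact h
    have e03 : g (Sum.inr (Sum.inr (Sum.inl ⟨(0,3), by decide⟩))) = 0 := by
      have h := congrArg (fun X => ((δ 0 * δ 3) * X).trace) hg
      simp only [cliffordBasis, delta5, mul_add, mul_zero, Matrix.trace_add, Matrix.trace_smul, Matrix.trace_neg, Matrix.trace_zero, Matrix.trace_one, smul_eq_mul, Complex.I_mul_I, mul_assoc, s00', s11', s22', s33', w10', w20', w21', w30', w31', w32', s00, s11, s22, s33, w10, w20, w21, w30, w31, w32, mul_neg, neg_mul, neg_neg, mul_one, one_mul, smul_mul_assoc, mul_smul_comm, smul_smul, smul_neg, neg_smul, one_smul, trd, tr01, tr02, tr03, tr12, tr13, tr23, tr012, tr013, tr023, tr123, tr0123, Fintype.card_fin, Nat.cast_ofNat, add_zero, zero_add, neg_zero, zero_mul, neg_eq_zero, mul_eq_zero, or_false, false_or, OfNat.ofNat_ne_zero] at h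
      exact h
    have e12 : g (Sum.inr (Sum.inr (Sum.inl ⟨(1,2), by decide⟩))) = 0 := by
      have h := congrArg (fun X => ((δ 1 * δ 2) * X).trace) hg
      simp only [cliffordBasis, delta5, mul_add, mul_zero, Matrix.trace_add, Matrix.trace_smul, Matrix.trace_neg, Matrix.trace_zero, Matrix.trace_one, smul_eq_mul, Complex.I_mul_I, mul_assoc, s00', s11', s22', s33', w10', w20', w21', w30', w31', w32', s00, s11, s22, s33, w10, w20, w21, w30, w31, w32, mul_neg, neg_mul, neg_neg, mul_one, one_mul, smul_mul_assoc, mul_smul_comm, smul_smul, smul_neg, neg_smul, one_smul, trd, tr01, tr02, tr03, tr12, tr13, tr23, tr012, tr013, tr023, tr123, tr0123, Fintype.card_fin, Nat.cast_ofNat, add_zero, zero_add, neg_zero, zero_mul, neg_eq_zero, mul_eq_zero, or_false, false_or, OfNat.ofNat_ne_zero] at h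
      exact h
    have e13 : g (Sum.inr (Sum.inr (Sum.inl ⟨(1,3), by decide⟩))) = 0 := by
      have h := congrArg (fun X => ((δ 1 * δ 3) * X).trace) hg
      simp only [cliffordBasis, delta5, mul_add, mul_zero, Matrix.trace_add, Matrix.trace_smul, Matrix.trace_neg, Matrix.trace_zero, Matrix.trace_one, smul_eq_mul, Complex.I_mul_I, mul_assoc, s00', s11', s22', s33', w10', w20', w21', w30', w31', w32', s00, s11, s22, s33, w10, w20, w21, w30, w31, w32, mul_neg, neg_mul, neg_neg, mul_one, one_mul, smul_mul_assoc, mul_smul_comm, smul_smul, smul_neg, neg_smul, one_smul, trd, tr01, tr02, tr03, tr12, tr13, tr23, tr012, tr013, tr023, tr123, tr0123, Fintype.card_fin, Nat.cast_ofNat, add_zero, zero_add, neg_zero, zero_mul, neg_eq_zero, mul_eq_zero, or_false, false_or, OfNat.ofNat_ne_zero] at h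
      exact h
    have e23 : g (Sum.inr (Sum.inr (Sum.inl ⟨(2,3), by decide⟩))) = 0 := by
      have h := congrArg (fun X => ((δ 2 * δ 3) * X).trace) hg
      simp only [cliffordBasis, delta5, mul_add, mul_zero, Matrix.trace_add, Matrix.trace_smul, Matrix.trace_neg, Matrix.trace_zero, Matrix.trace_one, smul_eq_mul, Complex.I_mul_I, mul_assoc, s00', s11', s22', s33', w10', w20', w21', w30', w31', w32', s00, s11, s22, s33, w10, w20, w21, w30, w31, w32, mul_neg, neg_mul, neg_neg, mul_one, one_mul, smul_mul_assoc, mul_smul_comm, smul_smul, smul_neg, neg_smul, one_smul, trd, tr01, tr02, tr03, tr12, tr13, tr23, tr012, tr013, tr023, tr123, tr0123, Fintype.card_fin, Nat.cast_ofNat, add_zero, zero_add, neg_zero, zero_mul, neg_eq_zero, mul_eq_zero, or_false, false_or, OfNat.ofNat_ne_zero] at h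
      exact h
    have f0 : g (Sum.inr (Sum.inr (Sum.inr (Sum.inl 0)))) = 0 := by
      have h := congrArg (fun X => ((delta5 δ * δ 0) * X).trace) hg
      simp only [cliffordBasis, delta5, mul_add, mul_zero, Matrix.trace_add, Matrix.trace_smul, Matrix.trace_neg, Matrix.trace_zero, Matrix.trace_one, smul_eq_mul, Complex.I_mul_I, mul_assoc, s00', s11', s22', s33', w10', w20', w21', w30', w31', w32', s00, s11, s22, s33, w10, w20, w21, w30, w31, w32, mul_neg, neg_mul, neg_neg, mul_one, one_mul, smul_mul_assoc, mul_smul_comm, smul_smul, smul_neg, neg_smul, one_smul, trd, tr01, tr02, tr03, tr12, tr13, tr23, tr012, tr013, tr023, tr123, tr0123, Fintype.card_fin, Nat.cast_ofNat, add_zero, zero_add, neg_zero, zero_mul, neg_eq_zero, mul_eq_zero, or_false, false_or, OfNat.ofNat_ne_zero] at h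
      exact h
    have f1 : g (Sum.inr (Sum.inr (Sum.inr (Sum.inl 1)))) = 0 := by
      have h := congrArg (fun X => ((delta5 δ * δ 1) * X).trace) hg
      simp only [cliffordBasis, delta5, mul_add, mul_zero, Matrix.trace_add, Matrix.trace_smul, Matrix.trace_neg, Matrix.trace_zero, Matrix.trace_one, smul_eq_mul, Complex.I_mul_I, mul_assoc, s00', s11', s22', s33', w10', w20', w21', w30', w31', w32', s00, s11, s22, s33, w10, w20, w21, w30, w31, w32, mul_neg, neg_mul, neg_neg, mul_one, one_mul, smul_mul_assoc, mul_smul_comm, smul_smul, smul_neg, neg_smul, one_smul, trd, tr01, tr02, tr03, tr12, tr13, tr23, tr012, tr013, tr023, tr123, tr0123, Fintype.card_fin, Nat.cast_ofNat, add_zero, zero_add, neg_zero, zero_mul, neg_eq_zero, mul_eq_zero, or_false, false_or, OfNat.ofNat_ne_zero] at h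
      exact h
    have f2 : g (Sum.inr (Sum.inr (Sum.inr (Sum.inl 2)))) = 0 := by
      have h := congrArg (fun X => ((delta5 δ * δ 2) * X).trace) hg
      simp only [cliffordBasis, delta5, mul_add, mul_zero, Matrix.trace_add, Matrix.trace_smul, Matrix.trace_neg, Matrix.trace_zero, Matrix.trace_one, smul_eq_mul, Complex.I_mul_I, mul_assoc, s00', s11', s22', s33', w10', w20', w21', w30', w31', w32', s00, s11, s22, s33, w10, w20, w21, w30, w31, w32, mul_neg, neg_mul, neg_neg, mul_one, one_mul, smul_mul_assoc, mul_smul_comm, smul_smul, smul_neg, neg_smul, one_smul, trd, tr01, tr02, tr03, tr12, tr13, tr23, tr012, tr013, tr023, tr123, tr0123, Fintype.card_fin, Nat.cast_ofNat, add_zero, zero_add, neg_zero, zero_mul, neg_eq_zero, mul_eq_zero, or_false, false_or, OfNat.ofNat_ne_zero] at h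
      exact h
    have f3 : g (Sum.inr (Sum.inr (Sum.inr (Sum.inl 3)))) = 0 := by
      have h := congrArg (fun X => ((delta5 δ * δ 3) * X).trace) hg
      simp only [cliffordBasis, delta5, mul_add, mul_zero, Matrix.trace_add, Matrix.trace_smul, Matrix.trace_neg, Matrix.trace_zero, Matrix.trace_one, smul_eq_mul, Complex.I_mul_I, mul_assoc, s00', s11', s22', s33', w10', w20', w21', w30', w31', w32', s00, s11, s22, s33, w10, w20, w21, w30, w31, w32, mul_neg, neg_mul, neg_neg, mul_one, one_mul, smul_mul_assoc, mul_smul_comm, smul_smul, smul_neg, neg_smul, one_smul, trd, tr01, tr02, tr03, tr12, tr13, tr23, tr012, tr013, tr023, tr123, tr0123, Fintype.card_fin, Nat.cast_ofNat, add_zero, zero_add, neg_zero, zero_mul, neg_eq_zero, mul_eq_zero, or_false, false_or, OfNat.ofNat_ne_zero] at h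
      exact h
    have e5 : g (Sum.inr (Sum.inr (Sum.inr (Sum.inr ())))) = 0 := by
      have h := congrArg (fun X => ((delta5 δ) * X).trace) hg
      simp only [cliffordBasis, delta5, mul_add, mul_zero, Matrix.trace_add, Matrix.trace_smul, Matrix.trace_neg, Matrix.trace_zero, Matrix.trace_one, smul_eq_mul, Complex.I_mul_I, mul_assoc, s00', s11', s22', s33', w10', w20', w21', w30', w31', w32', s00, s11, s22, s33, w10, w20, w21, w30, w31, w32, mul_neg, neg_mul, neg_neg, mul_one, one_mul, smul_mul_assoc, mul_smul_comm, smul_smul, smul_neg, neg_smul, one_smul, trd, tr01, tr02, tr03, tr12, tr13, tr23, tr012, tr013, tr023, tr123, tr0123, Fintype.card_fin, Nat.cast_ofNat, add_zero, zero_add, neg_zero, zero_mul, neg_eq_zero, mul_eq_zero, or_false, false_or, OfNat.ofNat_ne_zero] at h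
      exact h
    intro i
    rcases i with u | μ | ⟨⟨a,b⟩,hab⟩ | μ | u
    · exact e1
    · fin_cases μ
      · exact ed0
      · exact ed1
      · exact ed2
      · exact ed3
    · fin_cases a <;> fin_cases b <;>
        first
          | exact absurd hab (by decide)
          | exact e01 | exact e02 | exact e03 | exact e12 | exact e13 | exact e23
    · fin_cases μ
      · exact f0
      · exact f1
      · exact f2
      · exact f3
    · exact e5
  refine ⟨hli, hli.span_eq_top_of_card_eq_finrank ?_⟩
  rw [show Fintype.card (Unit ⊕ Fin 4 ⊕ {p : Fin 4 × Fin 4 // p.1 < p.2} ⊕ Fin 4 ⊕ Unit) = 16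
      from by decide, Module.finrank_matrix]
  simp
end
end
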